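/- For integers k ≥ 1 and n ≥ 1, let χ_n be the characteristic function of the interval u_1^{k−1}(v_n([0,1))) (where u_1^{k−1} denotes the (k−1)-fold iterate of u_1, with u_1^0 = id). Then for every x ∈ [0,1), (Lᵏ χ_n)(x) = a_n (1 + 2cos²(2πn⁴x)) (|J|/N)^{k−1}. -/

import Mathlib

open MeasureTheory Set Filter

noncomputable section

namespace Gouezel

/-- `b a n = 4 * ∑_{k=1}^n a_k` (left endpoints of the intervals `I_n`). -/
def b (a : ℕ → ℝ) (n : ℕ) : ℝ := 4 * ∑ k ∈ Finset.range n, a (k + 1)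

/-- `b_∞ = 4 * ∑_{n=1}^∞ a_n`. -/
def binf (a : ℕ → ℝ) : ℝ := 4 * ∑' n : ℕ, a (n + 1)

/-- The length `|J| = 1 - b_∞` of the interval `J = [b_∞, 1)`. -/
def lenJ (a : ℕ → ℝ) : ℝ := 1 - binf a

/-- `v_n'(x) = a_n (1 + 2 cos²(2π n⁴ x))`. -/
def vd (a : ℕ → ℝ) (n : ℕ) (x : ℝ) : ℝ :=
  a n * (1 + 2 * Real.cos (2 * Real.pi * (n : ℝ) ^ 4 * x) ^ 2)

/-- `w_n'(x) = a_n (1 + 2 sin²(2π n⁴ x))`. -/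
def wd (a : ℕ → ℝ) (n : ℕ) (x : ℝ) : ℝ :=
  a n * (1 + 2 * Real.sin (2 * Real.pi * (n : ℝ) ^ 4 * x) ^ 2)

/-- The inverse branch `v_n(x) = b_{n-1} + ∫_0^x v_n'(t) dt`. -/
def v (a : ℕ → ℝ) (n : ℕ) (x : ℝ) : ℝ := b a (n - 1) + ∫ t in (0:ℝ)..x, vd a n t

/-- The inverse branch `w_n(x) = b_{n-1} + 2 a_n + ∫_0^x w_n'(t) dt`. -/
def w (a : ℕ → ℝ) (n : ℕ) (x : ℝ) : ℝ :=
  b a (n - 1) + 2 * a n + ∫ t in (0:ℝ)..x, wd a n t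

/-- The affine inverse branches `u_j(x) = b_∞ + (j-1)|J|/N + (|J|/N) x`, `1 ≤ j ≤ N`. -/
def u (a : ℕ → ℝ) (N : ℕ) (j : ℕ) (x : ℝ) : ℝ :=
  binf a + ((j : ℝ) - 1) * (lenJ a / N) + (lenJ a / N) * x

/-- The transfer operator on complex-valued functions. -/
def L (a : ℕ → ℝ) (N : ℕ) (f : ℝ → ℂ) (x : ℝ) : ℂ :=
  (∑' n : ℕ, ((vd a (n + 1) x : ℂ) * f (v a (n + 1) x)
      + (wd a (n + 1) x : ℂ) * f (w a (n + 1) x)))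
    + ((lenJ a / (N : ℝ) : ℝ) : ℂ) * ∑ j ∈ Finset.range N, f (u a N (j + 1) x)

/-- The transfer operator on real-valued functions. -/
def LR (a : ℕ → ℝ) (N : ℕ) (f : ℝ → ℝ) (x : ℝ) : ℝ :=
  (∑' n : ℕ, (vd a (n + 1) x * f (v a (n + 1) x) + wd a (n + 1) x * f (w a (n + 1) x)))
    + (lenJ a / N) * ∑ j ∈ Finset.range N, f (u a N (j + 1) x)

/-- The part `L_n` of the transfer operator coming from the branches `v_n, w_n`. -/
def Ln (a : ℕ → ℝ) (n : ℕ) (f : ℝ → ℂ) (x : ℝ) : ℂ :=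
  (vd a n x : ℂ) * f (v a n x) + (wd a n x : ℂ) * f (w a n x)

/-- Sup norm of `f` on `[0,1)`. -/
def supNorm (f : ℝ → ℂ) : ℝ := ⨆ x : Ico (0:ℝ) 1, ‖f x.1‖

/-- Best Lipschitz constant of `f` on `[0,1)` (the term at `x = y` is `0/0 = 0`). -/
def lipConst (f : ℝ → ℂ) : ℝ :=
  ⨆ p : Ico (0:ℝ) 1 × Ico (0:ℝ) 1, ‖f p.1.1 - f p.2.1‖ / |p.1.1 - p.2.1|

/-- Lipschitz norm `‖f‖_Lip = sup|f| + Lip(f)` on `[0,1)`. -/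
def lipNorm (f : ℝ → ℂ) : ℝ := supNorm f + lipConst f

/-- `f` is bounded and Lipschitz on `[0,1)`. -/
def BddLip (f : ℝ → ℂ) : Prop :=
  ∃ K : ℝ, (∀ x ∈ Ico (0:ℝ) 1, ‖f x‖ ≤ K) ∧
    ∀ x ∈ Ico (0:ℝ) 1, ∀ y ∈ Ico (0:ℝ) 1, ‖f x - f y‖ ≤ K * |x - y|

/-- The specific choice `a_n = 1/(100 n³)`. -/
def aa (n : ℕ) : ℝ := 1 / (100 * (n : ℝ) ^ 3)

/-- Standing hypotheses on the sequence `(a_n)`: positivity and `∑ a_n < 1/4`. -/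
def StdHyp (a : ℕ → ℝ) : Prop :=
  (∀ n : ℕ, 1 ≤ n → 0 < a n) ∧ Summable (fun n : ℕ => a (n + 1)) ∧
    (∑' n : ℕ, a (n + 1)) < 1 / 4

/-- `T : [0,1) → [0,1)` has the maps `v_n, w_n` (`n ≥ 1`) and `u_j` (`1 ≤ j ≤ N`)
as inverse branches. -/
def InverseBranches (a : ℕ → ℝ) (N : ℕ) (T : ℝ → ℝ) : Prop :=
  MapsTo T (Ico (0:ℝ) 1) (Ico (0:ℝ) 1) ∧
    ∀ x ∈ Ico (0:ℝ) 1,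
      (∀ n : ℕ, 1 ≤ n → T (v a n x) = x ∧ T (w a n x) = x) ∧
      (∀ j : ℕ, 1 ≤ j → j ≤ N → T (u a N j x) = x)

-- ### auxiliary lemmas

lemma sin_lip (p q : ℝ) : |Real.sin p - Real.sin q| ≤ |p - q| := by
  rw [Real.sin_sub_sin]
  calc |2 * Real.sin ((p - q) / 2) * Real.cos ((p + q) / 2)|
      = 2 * |Real.sin ((p - q) / 2)| * |Real.cos ((p + q) / 2)| := by
        rw [abs_mul, abs_mul, abs_two]
    _ ≤ 2 * |(p - q) / 2| * 1 := by
        have h1 := Real.abs_sin_le_abs (x := (p - q) / 2)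
        have h2 := Real.abs_cos_le_one ((p + q) / 2)
        have h3 : (0:ℝ) ≤ |Real.sin ((p - q) / 2)| := abs_nonneg _
        have h4 : (0:ℝ) ≤ |(p - q) / 2| := abs_nonneg _
        nlinarith
    _ = |p - q| := by rw [abs_div, abs_two]; ring

variable {a : ℕ → ℝ} {N : ℕ}

lemma b_succ (a : ℕ → ℝ) (m : ℕ) : b a (m + 1) = b a m + 4 * a (m + 1) := by
  simp only [b, Finset.sum_range_succ]; ring

lemma b_nonneg (ha : StdHyp a) (m : ℕ) : 0 ≤ b a m :=
  mul_nonneg (by norm_num)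
    (Finset.sum_nonneg fun k _ => (ha.1 (k + 1) (Nat.le_add_left 1 k)).le)

lemma b_mono (ha : StdHyp a) : Monotone (b a) :=
  monotone_nat_of_le_succ fun m => by
    rw [b_succ]; linarith [ha.1 (m + 1) (Nat.le_add_left 1 m)]

lemma b_le_binf (ha : StdHyp a) (m : ℕ) : b a m ≤ binf a := by
  refine mul_le_mul_of_nonneg_left ?_ (by norm_num)
  exact Summable.sum_le_tsum (Finset.range m)
    (fun k _ => (ha.1 (k + 1) (Nat.le_add_left 1 k)).le) ha.2.1

lemma binf_nonneg (ha : StdHyp a) : 0 ≤ binf a :=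
  mul_nonneg (by norm_num)
    (tsum_nonneg fun k => (ha.1 (k + 1) (Nat.le_add_left 1 k)).le)

lemma binf_lt_one (ha : StdHyp a) : binf a < 1 := by
  have := ha.2.2; unfold binf; linarith

lemma lenJ_pos (ha : StdHyp a) : 0 < lenJ a := by
  have := binf_lt_one ha; unfold lenJ; linarith

lemma c_pos (ha : StdHyp a) (hN : 1 ≤ N) : 0 < lenJ a / N := by
  have := lenJ_pos ha
  have hN0 : (0:ℝ) < N := by exact_mod_cast hN
  positivity

lemma hasDerivAt_F (a : ℕ → ℝ) {n : ℕ} (hn : 1 ≤ n) (t : ℝ) :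
    HasDerivAt (fun s : ℝ => a n * (2 * s
      + Real.sin (4 * Real.pi * (n : ℝ) ^ 4 * s) / (4 * Real.pi * (n : ℝ) ^ 4)))
      (vd a n t) t := by
  have hn0 : (0:ℝ) < n := by exact_mod_cast hn
  have hc : (0:ℝ) < 4 * Real.pi * (n : ℝ) ^ 4 := by positivity
  have h1 : HasDerivAt (fun s : ℝ => 4 * Real.pi * (n : ℝ) ^ 4 * s)
      (4 * Real.pi * (n : ℝ) ^ 4) t := by
    simpa using (hasDerivAt_id t).const_mul (4 * Real.pi * (n : ℝ) ^ 4)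
  have h2 := (Real.hasDerivAt_sin (4 * Real.pi * (n : ℝ) ^ 4 * t)).comp t h1
  have h3 := ((hasDerivAt_id t).const_mul 2).add
    (h2.div_const (4 * Real.pi * (n : ℝ) ^ 4))
  have h4 := h3.const_mul (a n)
  have key : Real.cos (4 * Real.pi * (n : ℝ) ^ 4 * t)
      = 2 * Real.cos (2 * Real.pi * (n : ℝ) ^ 4 * t) ^ 2 - 1 := by
    rw [show 4 * Real.pi * (n : ℝ) ^ 4 * t = 2 * (2 * Real.pi * (n : ℝ) ^ 4 * t) by ring,
      Real.cos_two_mul]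
  refine h4.congr_deriv ?_
  unfold vd
  rw [mul_div_cancel_right₀ _ (ne_of_gt hc), key]
  ring

lemma hasDerivAt_G (a : ℕ → ℝ) {n : ℕ} (hn : 1 ≤ n) (t : ℝ) :
    HasDerivAt (fun s : ℝ => a n * (2 * s
      - Real.sin (4 * Real.pi * (n : ℝ) ^ 4 * s) / (4 * Real.pi * (n : ℝ) ^ 4)))
      (wd a n t) t := by
  have hn0 : (0:ℝ) < n := by exact_mod_cast hn
  have hc : (0:ℝ) < 4 * Real.pi * (n : ℝ) ^ 4 := by positivity
  have h1 : HasDerivAt (fun s : ℝ => 4 * Real.pi * (n : ℝ) ^ 4 * s)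
      (4 * Real.pi * (n : ℝ) ^ 4) t := by
    simpa using (hasDerivAt_id t).const_mul (4 * Real.pi * (n : ℝ) ^ 4)
  have h2 := (Real.hasDerivAt_sin (4 * Real.pi * (n : ℝ) ^ 4 * t)).comp t h1
  have h3 := ((hasDerivAt_id t).const_mul 2).sub
    (h2.div_const (4 * Real.pi * (n : ℝ) ^ 4))
  have h4 := h3.const_mul (a n)
  have key : Real.cos (4 * Real.pi * (n : ℝ) ^ 4 * t)
      = 1 - 2 * Real.sin (2 * Real.pi * (n : ℝ) ^ 4 * t) ^ 2 := by
    rw [show 4 * Real.pi * (n : ℝ) ^ 4 * t = 2 * (2 * Real.pi * (n : ℝ) ^ 4 * t) by ring,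
      Real.cos_two_mul]
    have := Real.sin_sq_add_cos_sq (2 * Real.pi * (n : ℝ) ^ 4 * t)
    nlinarith
  refine h4.congr_deriv ?_
  unfold wd
  rw [mul_div_cancel_right₀ _ (ne_of_gt hc), key]
  ring

lemma v_apply (a : ℕ → ℝ) {n : ℕ} (hn : 1 ≤ n) (x : ℝ) :
    v a n x = b a (n - 1) + a n * (2 * x
      + Real.sin (4 * Real.pi * (n : ℝ) ^ 4 * x) / (4 * Real.pi * (n : ℝ) ^ 4)) := by
  unfold v
  have hint : IntervalIntegrable (vd a n) volume 0 x := by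
    apply Continuous.intervalIntegrable
    unfold vd; fun_prop
  rw [intervalIntegral.integral_eq_sub_of_hasDerivAt (fun t _ => hasDerivAt_F a hn t) hint]
  simp

lemma w_apply (a : ℕ → ℝ) {n : ℕ} (hn : 1 ≤ n) (x : ℝ) :
    w a n x = b a (n - 1) + 2 * a n + a n * (2 * x
      - Real.sin (4 * Real.pi * (n : ℝ) ^ 4 * x) / (4 * Real.pi * (n : ℝ) ^ 4)) := by
  unfold w
  have hint : IntervalIntegrable (wd a n) volume 0 x := by
    apply Continuous.intervalIntegrable
    unfold wd; fun_prop
  rw [intervalIntegral.integral_eq_sub_of_hasDerivAt (fun t _ => hasDerivAt_G a hn t) hint]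
  simp

lemma sin_bounds {n : ℕ} (hn : 1 ≤ n) {x : ℝ} (h0 : 0 ≤ x) (h1 : x ≤ 1) :
    -((4 * Real.pi * (n : ℝ) ^ 4) * x) ≤ Real.sin (4 * Real.pi * (n : ℝ) ^ 4 * x) ∧
    Real.sin (4 * Real.pi * (n : ℝ) ^ 4 * x) ≤ (4 * Real.pi * (n : ℝ) ^ 4) * (1 - x) ∧
    -((4 * Real.pi * (n : ℝ) ^ 4) * (1 - x)) ≤ Real.sin (4 * Real.pi * (n : ℝ) ^ 4 * x) ∧
    Real.sin (4 * Real.pi * (n : ℝ) ^ 4 * x) ≤ (4 * Real.pi * (n : ℝ) ^ 4) * x := by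
  have hn0 : (0:ℝ) < n := by exact_mod_cast hn
  have hc : (0:ℝ) < 4 * Real.pi * (n : ℝ) ^ 4 := by positivity
  set c := 4 * Real.pi * (n : ℝ) ^ 4 with hcdef
  have hzero : Real.sin c = 0 := by
    have : c = ((4 * n ^ 4 : ℕ) : ℝ) * Real.pi := by push_cast; ring
    rw [this, Real.sin_nat_mul_pi]
  have hA : |Real.sin (c * x) - Real.sin 0| ≤ |c * x - 0| := sin_lip _ _
  rw [Real.sin_zero, sub_zero, sub_zero, abs_of_nonneg (by positivity : (0:ℝ) ≤ c * x)] at hA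
  have hB : |Real.sin (c * x) - Real.sin (c * 1)| ≤ |c * x - c * 1| := sin_lip _ _
  rw [mul_one, hzero, sub_zero] at hB
  have : |c * x - c| = c * (1 - x) := by
    rw [abs_of_nonpos (by nlinarith)]; ring
  rw [this] at hB
  have hA1 := abs_le.1 hA
  have hB1 := abs_le.1 hB
  exact ⟨hA1.1, hB1.2, hB1.1, hA1.2⟩

lemma v_bounds (ha : StdHyp a) {n : ℕ} (hn : 1 ≤ n) {x : ℝ} (h0 : 0 ≤ x) (h1 : x ≤ 1) :
    b a (n - 1) + a n * x ≤ v a n x ∧ v a n x ≤ b a (n - 1) + a n * (1 + x) := by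
  have hn0 : (0:ℝ) < n := by exact_mod_cast hn
  have hc : (0:ℝ) < 4 * Real.pi * (n : ℝ) ^ 4 := by positivity
  have han := ha.1 n hn
  obtain ⟨hA, hB, -, -⟩ := sin_bounds hn h0 h1
  rw [v_apply a hn]
  set c := 4 * Real.pi * (n : ℝ) ^ 4
  set s := Real.sin (c * x)
  have hq1 : -x ≤ s / c := by rw [le_div_iff₀ hc]; nlinarith
  have hq2 : s / c ≤ 1 - x := by rw [div_le_iff₀ hc]; nlinarith
  constructor <;> nlinarith

lemma w_bounds (ha : StdHyp a) {n : ℕ} (hn : 1 ≤ n) {x : ℝ} (h0 : 0 ≤ x) (h1 : x ≤ 1) :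
    b a (n - 1) + 2 * a n + a n * x ≤ w a n x ∧
      w a n x ≤ b a (n - 1) + 2 * a n + a n * (1 + x) := by
  have hn0 : (0:ℝ) < n := by exact_mod_cast hn
  have hc : (0:ℝ) < 4 * Real.pi * (n : ℝ) ^ 4 := by positivity
  have han := ha.1 n hn
  obtain ⟨-, -, hA, hB⟩ := sin_bounds hn h0 h1
  rw [w_apply a hn]
  set c := 4 * Real.pi * (n : ℝ) ^ 4
  set s := Real.sin (c * x)
  have hq1 : s / c ≤ x := by rw [div_le_iff₀ hc]; nlinarith
  have hq2 : -(1 - x) ≤ s / c := by rw [le_div_iff₀ hc]; nlinarith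
  constructor <;> nlinarith

lemma b_pred {n : ℕ} (hn : 1 ≤ n) : b a n = b a (n - 1) + 4 * a n := by
  have h : n - 1 + 1 = n := by omega
  conv_lhs => rw [← h]
  rw [b_succ, h]

lemma v_mem (ha : StdHyp a) {n : ℕ} (hn : 1 ≤ n) {x : ℝ} (hx : x ∈ Ico (0:ℝ) 1) :
    v a n x ∈ Ico (b a (n - 1)) (b a (n - 1) + 2 * a n) := by
  obtain ⟨hx0, hx1⟩ := hx
  obtain ⟨h1, h2⟩ := v_bounds ha hn hx0 hx1.le
  have han := ha.1 n hn
  constructor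
  · nlinarith
  · nlinarith [hx1]

lemma w_mem (ha : StdHyp a) {n : ℕ} (hn : 1 ≤ n) {x : ℝ} (hx : x ∈ Ico (0:ℝ) 1) :
    w a n x ∈ Ico (b a (n - 1) + 2 * a n) (b a n) := by
  obtain ⟨hx0, hx1⟩ := hx
  obtain ⟨h1, h2⟩ := w_bounds ha hn hx0 hx1.le
  have han := ha.1 n hn
  rw [b_pred hn]
  constructor
  · nlinarith
  · nlinarith [hx1]

lemma u_mem (ha : StdHyp a) (hN : 1 ≤ N) {j : ℕ} (hj : 1 ≤ j) {x : ℝ}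
    (hx : x ∈ Ico (0:ℝ) 1) :
    u a N j x ∈ Ico (binf a + ((j : ℝ) - 1) * (lenJ a / N)) (binf a + (j : ℝ) * (lenJ a / N)) := by
  have hc := c_pos ha hN
  unfold u
  constructor
  · nlinarith [hx.1]
  · nlinarith [hx.2]

lemma v_mem01 (ha : StdHyp a) {n : ℕ} (hn : 1 ≤ n) {x : ℝ} (hx : x ∈ Ico (0:ℝ) 1) :
    v a n x ∈ Ico (0:ℝ) 1 := by
  obtain ⟨h1, h2⟩ := v_mem ha hn hx
  have h3 := b_nonneg ha (n - 1)
  have h4 : b a (n - 1) + 2 * a n ≤ b a n := by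
    rw [b_pred hn]; linarith [ha.1 n hn]
  have h5 := (b_le_binf ha n).trans_lt (binf_lt_one ha)
  exact ⟨le_trans h3 h1, by linarith⟩

lemma w_mem01 (ha : StdHyp a) {n : ℕ} (hn : 1 ≤ n) {x : ℝ} (hx : x ∈ Ico (0:ℝ) 1) :
    w a n x ∈ Ico (0:ℝ) 1 := by
  obtain ⟨h1, h2⟩ := w_mem ha hn hx
  have h3 := b_nonneg ha (n - 1)
  have h5 := (b_le_binf ha n).trans_lt (binf_lt_one ha)
  have han := ha.1 n hn
  exact ⟨by linarith, by linarith⟩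

lemma u_mem01 (ha : StdHyp a) (hN : 1 ≤ N) {j : ℕ} (hj : 1 ≤ j) (hjN : j ≤ N) {x : ℝ}
    (hx : x ∈ Ico (0:ℝ) 1) : u a N j x ∈ Ico (0:ℝ) 1 := by
  obtain ⟨h1, h2⟩ := u_mem ha hN hj hx
  have hc := c_pos ha hN
  have hb0 := binf_nonneg ha
  have hj1 : (1:ℝ) ≤ (j:ℝ) := by exact_mod_cast hj
  have hjN' : (j:ℝ) ≤ (N:ℝ) := by exact_mod_cast hjN
  have hN0 : (N:ℝ) ≠ 0 := by positivity
  have hNc : (N:ℝ) * (lenJ a / N) = lenJ a := by field_simp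
  have h6 : (j:ℝ) * (lenJ a / N) ≤ (N:ℝ) * (lenJ a / N) := by nlinarith
  have h7 : binf a + lenJ a = 1 := by unfold lenJ; ring
  constructor
  · nlinarith
  · calc u a N j x < binf a + (j:ℝ) * (lenJ a / N) := h2
      _ ≤ binf a + (N:ℝ) * (lenJ a / N) := by linarith
      _ = 1 := by rw [hNc, h7]

-- ### transfer operator lemmas

lemma LR_congr (ha : StdHyp a) (hN : 1 ≤ N) {f g : ℝ → ℝ}
    (hfg : ∀ y ∈ Ico (0:ℝ) 1, f y = g y) {x : ℝ} (hx : x ∈ Ico (0:ℝ) 1) :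
    LR a N f x = LR a N g x := by
  unfold LR
  congr 1
  · refine tsum_congr fun m => ?_
    rw [hfg _ (v_mem01 ha (Nat.le_add_left 1 m) hx), hfg _ (w_mem01 ha (Nat.le_add_left 1 m) hx)]
  · congr 1
    refine Finset.sum_congr rfl fun j hj => ?_
    exact hfg _ (u_mem01 ha hN (Nat.le_add_left 1 j) (Finset.mem_range.1 hj) hx)

lemma LR_iter_congr (ha : StdHyp a) (hN : 1 ≤ N) (m : ℕ) {f g : ℝ → ℝ}
    (hfg : ∀ y ∈ Ico (0:ℝ) 1, f y = g y) :
    ∀ x ∈ Ico (0:ℝ) 1, (LR a N)^[m] f x = (LR a N)^[m] g x := by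
  induction m generalizing f g with
  | zero => exact hfg
  | succ m ih =>
    intro x hx
    rw [Function.iterate_succ_apply, Function.iterate_succ_apply]
    exact ih (fun y hy => LR_congr ha hN hfg hy) x hx

lemma LR_smul (a : ℕ → ℝ) (N : ℕ) (c : ℝ) (f : ℝ → ℝ) (x : ℝ) :
    LR a N (fun y => c * f y) x = c * LR a N f x := by
  unfold LR
  rw [mul_add, ← tsum_mul_left]
  congr 1
  · exact tsum_congr fun m => by ring
  · rw [show ∑ j ∈ Finset.range N, c * f (u a N (j + 1) x)
        = c * ∑ j ∈ Finset.range N, f (u a N (j + 1) x) from (Finset.mul_sum _ _ _).symm]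
    ring

lemma LR_iter_smul (a : ℕ → ℝ) (N : ℕ) (m : ℕ) (c : ℝ) (f : ℝ → ℝ) (x : ℝ) :
    (LR a N)^[m] (fun y => c * f y) x = c * (LR a N)^[m] f x := by
  induction m generalizing f x with
  | zero => rfl
  | succ m ih =>
    rw [Function.iterate_succ_apply, Function.iterate_succ_apply]
    have : LR a N (fun y => c * f y) = fun y => c * LR a N f y :=
      funext fun y => LR_smul a N c f y
    rw [this, ih]

lemma LR_base (ha : StdHyp a) (hN : 1 ≤ N) {n : ℕ} (hn : 1 ≤ n) {x : ℝ}
    (hx : x ∈ Ico (0:ℝ) 1) :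
    LR a N (Set.indicator (v a n '' Ico (0:ℝ) 1) fun _ => (1:ℝ)) x = vd a n x := by
  set f := Set.indicator (v a n '' Ico (0:ℝ) 1) fun _ => (1:ℝ) with hf
  have himg : v a n '' Ico (0:ℝ) 1 ⊆ Ico (b a (n - 1)) (b a (n - 1) + 2 * a n) := by
    rintro p ⟨y, hy, rfl⟩
    exact v_mem ha hn hy
  have hne : ∀ p : ℝ, p ∉ Ico (b a (n - 1)) (b a (n - 1) + 2 * a n) → f p = 0 :=
    fun p hp => Set.indicator_of_notMem (fun h => hp (himg h)) _
  have han := ha.1 n hn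
  have hbn : b a (n - 1) + 2 * a n ≤ b a n := by rw [b_pred hn]; linarith
  unfold LR
  have hsum : (∑' m : ℕ, (vd a (m + 1) x * f (v a (m + 1) x)
      + wd a (m + 1) x * f (w a (m + 1) x))) = vd a n x := by
    rw [tsum_eq_single (n - 1) ?_]
    · have hn1 : n - 1 + 1 = n := by omega
      rw [hn1]
      have h1 : f (v a n x) = 1 := Set.indicator_of_mem (Set.mem_image_of_mem _ hx) _
      have h2 : f (w a n x) = 0 := by
        refine hne _ fun hmem => ?_
        have := (w_mem ha hn hx).1
        exact absurd hmem.2 (not_lt.2 this)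
      rw [h1, h2]; ring
    · intro m hm
      have hm1 : 1 ≤ m + 1 := Nat.le_add_left 1 m
      have ham := ha.1 (m + 1) hm1
      have hvm := v_mem ha hm1 (x := x) hx
      have hwm := w_mem ha hm1 (x := x) hx
      have hmn : m + 1 ≠ n := fun h => hm (by omega)
      rcases lt_or_gt_of_ne hmn with h | h
      · -- m + 1 < n, so m + 1 ≤ n - 1
        have hb1 : b a (m + 1) ≤ b a (n - 1) := b_mono ha (by omega)
        have hb2 : b a (m + 1 - 1) + 2 * a (m + 1) ≤ b a (m + 1) := by
          rw [b_pred hm1]; linarith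
        have h1 : f (v a (m + 1) x) = 0 := by
          refine hne _ fun hmem => ?_
          have : v a (m + 1) x < b a (n - 1) := lt_of_lt_of_le hvm.2 (hb2.trans hb1)
          exact absurd hmem.1 (not_le.2 this)
        have h2 : f (w a (m + 1) x) = 0 := by
          refine hne _ fun hmem => ?_
          have : w a (m + 1) x < b a (n - 1) := lt_of_lt_of_le hwm.2 hb1
          exact absurd hmem.1 (not_le.2 this)
        rw [h1, h2]; ring
      · -- m + 1 > n, so n ≤ m = (m+1) - 1
        have hb1 : b a n ≤ b a (m + 1 - 1) := b_mono ha (by omega)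
        have h1 : f (v a (m + 1) x) = 0 := by
          refine hne _ fun hmem => ?_
          have : b a (n - 1) + 2 * a n ≤ v a (m + 1) x :=
            le_trans (hbn.trans hb1) hvm.1
          exact absurd hmem.2 (not_lt.2 this)
        have h2 : f (w a (m + 1) x) = 0 := by
          refine hne _ fun hmem => ?_
          have : b a (n - 1) + 2 * a n ≤ w a (m + 1) x := by
            refine le_trans (hbn.trans hb1) (le_trans ?_ hwm.1)
            linarith
          exact absurd hmem.2 (not_lt.2 this)
        rw [h1, h2]; ring
  have husum : ∀ j ∈ Finset.range N, f (u a N (j + 1) x) = 0 := by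
    intro j hj
    refine hne _ fun hmem => ?_
    have h1 := (u_mem ha hN (Nat.le_add_left 1 j) (x := x) hx).1
    have h2 : binf a ≤ binf a + ((j + 1 : ℕ) : ℝ) * (lenJ a / N)
        - 1 * (lenJ a / N) := by
      have hc := c_pos ha hN
      push_cast
      nlinarith [(Nat.cast_nonneg j : (0:ℝ) ≤ j)]
    have h3 : b a (n - 1) + 2 * a n ≤ u a N (j + 1) x := by
      refine le_trans (hbn.trans ((b_le_binf ha n))) (le_trans ?_ h1)
      push_cast
      have hc := c_pos ha hN
      nlinarith [(Nat.cast_nonneg j : (0:ℝ) ≤ j)]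
    exact absurd hmem.2 (not_lt.2 h3)
  rw [hsum, Finset.sum_eq_zero husum]
  ring

lemma LR_step (ha : StdHyp a) (hN : 1 ≤ N) {S : Set ℝ} (hS : S ⊆ Ico (0:ℝ) 1) {x : ℝ}
    (hx : x ∈ Ico (0:ℝ) 1) :
    LR a N (Set.indicator (u a N 1 '' S) fun _ => (1:ℝ)) x
      = (lenJ a / N) * Set.indicator S (fun _ => (1:ℝ)) x := by
  set c := lenJ a / N with hc
  have hcpos : 0 < c := c_pos ha hN
  set f := Set.indicator (u a N 1 '' S) fun _ => (1:ℝ) with hf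
  have hb0 := binf_nonneg ha
  have himg : u a N 1 '' S ⊆ Ico (binf a) (binf a + c) := by
    rintro p ⟨y, hy, rfl⟩
    have := u_mem ha hN le_rfl (hS hy)
    simpa using this
  have hlow : ∀ p : ℝ, p < binf a → f p = 0 := fun p hp =>
    Set.indicator_of_notMem (fun h => absurd (himg h).1 (not_le.2 hp)) _
  have hhigh : ∀ p : ℝ, binf a + c ≤ p → f p = 0 := fun p hp =>
    Set.indicator_of_notMem (fun h => absurd (himg h).2 (not_lt.2 hp)) _
  unfold LR
  have hsum : (∑' m : ℕ, (vd a (m + 1) x * f (v a (m + 1) x)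
      + wd a (m + 1) x * f (w a (m + 1) x))) = 0 := by
    rw [show (fun m : ℕ => vd a (m + 1) x * f (v a (m + 1) x)
        + wd a (m + 1) x * f (w a (m + 1) x)) = fun _ => (0:ℝ) from ?_, tsum_zero]
    funext m
    have hm1 : 1 ≤ m + 1 := Nat.le_add_left 1 m
    have hbin := b_le_binf ha (m + 1)
    have h1 : f (v a (m + 1) x) = 0 := by
      refine hlow _ ?_
      have h2 := (v_mem ha hm1 (x := x) hx).2
      have h3 : b a (m + 1 - 1) + 2 * a (m + 1) ≤ b a (m + 1) := by
        rw [b_pred hm1]; linarith [ha.1 (m + 1) hm1]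
      linarith
    have h2 : f (w a (m + 1) x) = 0 := by
      refine hlow _ ?_
      have h4 := (w_mem ha hm1 (x := x) hx).2
      linarith
    rw [h1, h2]; ring
  have husum : (∑ j ∈ Finset.range N, f (u a N (j + 1) x))
      = Set.indicator S (fun _ => (1:ℝ)) x := by
    rw [Finset.sum_eq_single_of_mem 0 (Finset.mem_range.2 hN)]
    · -- f (u 1 x) = indicator S 1 x
      simp only [hf, zero_add]
      by_cases hxS : x ∈ S
      · rw [Set.indicator_of_mem (Set.mem_image_of_mem _ hxS),
          Set.indicator_of_mem hxS]
      · rw [Set.indicator_of_notMem hxS]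
        refine Set.indicator_of_notMem ?_ _
        rintro ⟨y, hy, hyx⟩
        have heq : y = x := by
          have h5 := hyx
          unfold u at h5
          have hcN : c ≠ 0 := ne_of_gt hcpos
          rw [← hc] at h5
          have h6 : c * y = c * x := by linarith
          exact mul_left_cancel₀ hcN h6
        exact hxS (heq ▸ hy)
    · intro j hj hj0
      refine hhigh _ ?_
      have hj1 : (1:ℝ) ≤ (j:ℝ) := by exact_mod_cast Nat.one_le_iff_ne_zero.2 hj0
      unfold u
      rw [← hc]
      push_cast
      nlinarith [hx.1]
  rw [hsum, husum]
  ring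

lemma iter_subset (ha : StdHyp a) (hN : 1 ≤ N) {n : ℕ} (hn : 1 ≤ n) (m : ℕ) :
    (u a N 1)^[m] '' (v a n '' Ico (0:ℝ) 1) ⊆ Ico (0:ℝ) 1 := by
  induction m with
  | zero =>
    simp only [Function.iterate_zero, Set.image_id]
    rintro p ⟨y, hy, rfl⟩
    exact v_mem01 ha hn hy
  | succ m ih =>
    rw [Function.iterate_succ', Set.image_comp]
    rintro p ⟨q, hq, rfl⟩
    exact u_mem01 ha hN le_rfl hN (ih hq)


/-- with `χ_n` the characteristic function of `u_1^{k-1}(v_n([0,1)))`,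
one has `(L^k χ_n)(x) = a_n (1 + 2cos²(2πn⁴x)) (|J|/N)^{k-1}` on `[0,1)`. -/
theorem stmt3 (a : ℕ → ℝ) (N : ℕ) (hN : 1 ≤ N) (ha : StdHyp a)
    (k n : ℕ) (hk : 1 ≤ k) (hn : 1 ≤ n) :
    ∀ x ∈ Ico (0:ℝ) 1,
      (LR a N)^[k]
        (Set.indicator ((u a N 1)^[k - 1] '' (v a n '' Ico (0:ℝ) 1)) fun _ => (1:ℝ)) x
      = a n * (1 + 2 * Real.cos (2 * Real.pi * (n : ℝ) ^ 4 * x) ^ 2)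
          * (lenJ a / N) ^ (k - 1) := by
  obtain ⟨m, rfl⟩ : ∃ m, k = m + 1 := ⟨k - 1, by omega⟩
  clear hk
  simp only [Nat.add_sub_cancel]
  induction m with
  | zero =>
    intro x hx
    simp only [zero_add, Function.iterate_zero, Set.image_id, Function.iterate_one,
      pow_zero, mul_one]
    have h := LR_base ha hN hn hx
    unfold vd at h
    exact h
  | succ m ih =>
    intro x hx
    have hSm := iter_subset ha hN hn m
    have himg_eq : (u a N 1)^[m + 1] '' (v a n '' Ico (0:ℝ) 1)
        = u a N 1 '' ((u a N 1)^[m] '' (v a n '' Ico (0:ℝ) 1)) := by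
      rw [Function.iterate_succ', Set.image_comp]
    rw [himg_eq, Function.iterate_succ_apply]
    have hcongr := LR_iter_congr ha hN (m + 1)
      (f := LR a N (Set.indicator
        (u a N 1 '' ((u a N 1)^[m] '' (v a n '' Ico (0:ℝ) 1))) fun _ => (1:ℝ)))
      (g := fun y => (lenJ a / N) * Set.indicator
        ((u a N 1)^[m] '' (v a n '' Ico (0:ℝ) 1)) (fun _ => (1:ℝ)) y)
      (fun y hy => LR_step ha hN hSm hy) x hx
    rw [hcongr, LR_iter_smul a N (m + 1) _ _ x, ih x hx]
    ring


end Gouezel
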